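/- arXiv:1201.0142 — 2 statements merged into one kernel-verified Lean document; each statement's English description precedes it below -/
import Mathlib

section
/- For every k ≥ 2, the number of sequences (c_1, d_1, c_2, d_2, …, c_k, d_k) of integers such that (i) c_1 = 1, (ii) c_2 = 2, (iii) d_k = 2k, (iv) {c_1, d_1, …, c_k, d_k} = {1, 2, …, 2k}, and (v) c_i < c_{i+1} < d_i < d_{i+1} for every 1 ≤ i ≤ k−1, equals the Catalan number C_{k−1} = (1/k)·binom(2k−2, k−1). -/
open scoped Classical

noncomputable section

namespace Chains1324

open Finset DyckStep

/-- Number of elements of `A` that are at most `v`. -/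
def cnt (A : Finset ℕ) (v : ℕ) : ℕ := (A.filter (fun x => x ≤ v)).card

lemma cnt_le_card (A : Finset ℕ) (v : ℕ) : cnt A v ≤ A.card := Finset.card_filter_le _ _

lemma cnt_eq_card (A : Finset ℕ) {v : ℕ} (h : ∀ x ∈ A, x ≤ v) : cnt A v = A.card := by
  unfold cnt
  rw [Finset.filter_true_of_mem h]

lemma cnt_Icc (N v : ℕ) : cnt (Finset.Icc 1 N) v = min v N := by
  unfold cnt
  have : (Finset.Icc 1 N).filter (fun x => x ≤ v) = Finset.Icc 1 (min v N) := by
    ext x; simp only [Finset.mem_filter, Finset.mem_Icc, le_min_iff]; omega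
  rw [this, Nat.card_Icc]; omega

lemma cnt_sdiff_add {A S : Finset ℕ} (h : A ⊆ S) (v : ℕ) :
    cnt (S \ A) v + cnt A v = cnt S v := by
  unfold cnt
  rw [← Finset.card_union_of_disjoint (Finset.disjoint_filter_filter Finset.sdiff_disjoint),
    ← Finset.filter_union, Finset.sdiff_union_of_subset h]

/-- Counting for strictly monotone sequences: `c i ≤ v` iff `i < cnt (range c) v`. -/
lemma lt_cnt_iff {k : ℕ} {c : Fin k → ℕ} (hc : StrictMono c) (i : Fin k) (v : ℕ) :
    (i : ℕ) < cnt (Finset.univ.image c) v ↔ c i ≤ v := by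
  have hcard : cnt (Finset.univ.image c) v
      = (Finset.univ.filter (fun j : Fin k => c j ≤ v)).card := by
    unfold cnt
    rw [Finset.filter_image]
    exact Finset.card_image_of_injective _ hc.injective
  rw [hcard]
  constructor
  · intro h
    by_contra hv
    have hsub : (Finset.univ.filter (fun j : Fin k => c j ≤ v)) ⊆ Finset.Iio i := by
      intro j hj
      rw [Finset.mem_filter] at hj
      rw [Finset.mem_Iio]
      by_contra hji
      exact hv (le_trans (hc.monotone (not_lt.mp hji)) hj.2)
    have := Finset.card_le_card hsub
    rw [Fin.card_Iio] at this
    omega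
  · intro h
    have hsub : Finset.Iic i ⊆ Finset.univ.filter (fun j : Fin k => c j ≤ v) := by
      intro j hj
      rw [Finset.mem_Iic] at hj
      rw [Finset.mem_filter]
      exact ⟨Finset.mem_univ _, le_trans (hc.monotone hj) h⟩
    have := Finset.card_le_card hsub
    rw [Fin.card_Iic] at this
    omega

/-- A function on `Fin k` increasing at consecutive indices is strictly monotone. -/
lemma strictMono_of_chain {k : ℕ} {f : Fin k → ℕ}
    (h : ∀ (i : ℕ) (hi : i + 1 < k), f ⟨i, Nat.lt_of_succ_lt hi⟩ < f ⟨i + 1, hi⟩) : StrictMono f := by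
  have key : ∀ (j : ℕ) (hj : j < k) (i : ℕ) (hi : i < k), i < j → f ⟨i, hi⟩ < f ⟨j, hj⟩ := by
    intro j
    induction j with
    | zero => omega
    | succ j ih =>
      intro hj i hi hij
      rcases Nat.lt_or_ge i j with h' | h'
      · exact lt_trans (ih (by omega) i hi h') (h j hj)
      · have : i = j := by omega
        subst this
        exact h i hj
  intro i j hij
  have := key j.val j.isLt i.val i.isLt hij
  simpa using this

/-- The Dyck-step list associated to a finset `A`: position `j` (for `j < 2n`) is `U`
iff `j + 2 ∈ A`. -/
def wlist (n : ℕ) (A : Finset ℕ) : List DyckStep :=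
  (List.range (2 * n)).map (fun j => if j + 2 ∈ A then U else D)

lemma wlist_length (n : ℕ) (A : Finset ℕ) : (wlist n A).length = 2 * n := by
  simp [wlist]

lemma wlist_getElem (n : ℕ) (A : Finset ℕ) {j : ℕ} (h : j < 2 * n) :
    (wlist n A)[j]'(by rw [wlist_length]; exact h) = if j + 2 ∈ A then U else D := by
  simp [wlist]

lemma count_U_add_count_D (l : List DyckStep) : l.count U + l.count D = l.length := by
  induction l with
  | nil => rfl
  | cons a t ih => cases a <;> simp [List.count_cons] <;> omega

lemma card_filter_range (p : ℕ → Prop) [DecidablePred p] (M : ℕ) :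
    ((Finset.range M).filter p).card = (List.range M).countP (fun j => decide (p j)) := by
  induction M with
  | zero => rfl
  | succ M ih =>
    rw [Finset.range_add_one, List.range_succ, List.countP_append, Finset.filter_insert]
    by_cases h : p M
    · rw [if_pos h, Finset.card_insert_of_notMem (by simp), ih]
      simp [h]
    · rw [if_neg h, ih]
      simp [h]

lemma image_filter_range (A : Finset ℕ) (M : ℕ) :
    ((Finset.range M).filter (fun j => j + 2 ∈ A)).image (· + 2)
      = A.filter (fun v => 2 ≤ v ∧ v ≤ M + 1) := by
  ext v
  simp only [Finset.mem_image, Finset.mem_filter, Finset.mem_range]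
  constructor
  · rintro ⟨j, ⟨hj, hjA⟩, rfl⟩
    exact ⟨hjA, by omega, by omega⟩
  · rintro ⟨hv, h2, hM⟩
    exact ⟨v - 2, ⟨by omega, by rw [Nat.sub_add_cancel h2]; exact hv⟩, by omega⟩

lemma cnt_split {A : Finset ℕ} (h1 : 1 ∈ A) (hpos : ∀ x ∈ A, 1 ≤ x) (M : ℕ) :
    (A.filter (fun v => 2 ≤ v ∧ v ≤ M + 1)).card + 1 = cnt A (M + 1) := by
  unfold cnt
  have : A.filter (fun x => x ≤ M + 1)
      = insert 1 (A.filter (fun v => 2 ≤ v ∧ v ≤ M + 1)) := by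
    ext x
    simp only [Finset.mem_filter, Finset.mem_insert]
    constructor
    · rintro ⟨hx, hle⟩
      have := hpos x hx
      rcases Nat.eq_or_lt_of_le this with h | h
      · exact Or.inl h.symm
      · exact Or.inr ⟨hx, by omega, hle⟩
    · rintro (rfl | ⟨hx, h2, hle⟩)
      · exact ⟨h1, by omega⟩
      · exact ⟨hx, hle⟩
  rw [this, Finset.card_insert_of_notMem (by simp)]

/-- Main prefix-count formula for `wlist`. -/
lemma count_U_take {n : ℕ} {A : Finset ℕ} (h1 : 1 ∈ A) (hpos : ∀ x ∈ A, 1 ≤ x) (m : ℕ) :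
    ((wlist n A).take m).count U + 1 = cnt A (min m (2 * n) + 1) := by
  have h1' : (wlist n A).take m
      = (List.range (min m (2 * n))).map (fun j => if j + 2 ∈ A then U else D) := by
    rw [wlist, ← List.map_take, List.take_range]
  rw [h1', List.count_eq_countP, List.countP_map]
  have h2' : ∀ M, (List.range M).countP
      ((fun x => x == U) ∘ fun j => if j + 2 ∈ A then U else D)
      = (List.range M).countP (fun j => decide (j + 2 ∈ A)) := by
    intro M
    apply List.countP_congr
    intro j _
    by_cases h : j + 2 ∈ A <;> simp [h]
  rw [h2', ← card_filter_range]
  have h3' := congrArg Finset.card (image_filter_range A (min m (2 * n)))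
  rw [Finset.card_image_of_injective _ (fun a b => by omega)] at h3'
  rw [h3']
  exact cnt_split h1 hpos _

/-- The balanced-prefix condition on the "up-set" `A`. -/
def Good (k : ℕ) (A : Finset ℕ) : Prop :=
  A ⊆ Finset.Icc 1 (2 * k) ∧ A.card = k ∧
    ∀ v, 1 ≤ v → v ≤ 2 * k - 1 → cnt (Finset.Icc 1 (2 * k) \ A) v < cnt A v

lemma image_univ_orderEmbOfFin {A : Finset ℕ} {k : ℕ} (h : A.card = k) :
    Finset.univ.image (A.orderEmbOfFin h) = A := by
  apply Finset.eq_of_subset_of_card_le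
  · intro x hx
    rw [Finset.mem_image] at hx
    obtain ⟨i, -, rfl⟩ := hx
    exact Finset.orderEmbOfFin_mem A h i
  · rw [Finset.card_image_of_injective _ (A.orderEmbOfFin h).injective, Finset.card_univ,
      Fintype.card_fin, h]

section

variable {k : ℕ} {A : Finset ℕ} (hk : 2 ≤ k) (hA : Good k A)

include hk hA

lemma good_cnt_sum (v : ℕ) :
    cnt A v + cnt (Finset.Icc 1 (2 * k) \ A) v = min v (2 * k) := by
  rw [Nat.add_comm, cnt_sdiff_add hA.1, cnt_Icc]

lemma good_card_sdiff : (Finset.Icc 1 (2 * k) \ A).card = k := by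
  rw [Finset.card_sdiff_of_subset hA.1, Nat.card_Icc, hA.2.1]
  omega

lemma good_one_mem : 1 ∈ A := by
  have h1 := hA.2.2 1 le_rfl (by omega)
  have : 0 < cnt A 1 := by omega
  rw [cnt] at this
  obtain ⟨x, hx⟩ := Finset.card_pos.mp this
  rw [Finset.mem_filter] at hx
  have := hA.1 hx.1
  rw [Finset.mem_Icc] at this
  have : x = 1 := by omega
  subst this; exact hx.1

lemma good_cnt_top : cnt A (2 * k - 1) = k := by
  have h1 := hA.2.2 (2 * k - 1) (by omega) le_rfl
  have h2 := good_cnt_sum hk hA (2 * k - 1)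
  have h3 := cnt_le_card A (2 * k - 1)
  rw [hA.2.1] at h3
  omega

lemma good_top_not_mem : 2 * k ∉ A := by
  intro hmem
  have := good_cnt_top hk hA
  rw [cnt] at this
  have heq : A.filter (fun x => x ≤ 2 * k - 1) = A :=
    Finset.eq_of_subset_of_card_le (Finset.filter_subset _ _) (by rw [this, hA.2.1])
  have : 2 * k ∈ A.filter (fun x => x ≤ 2 * k - 1) := heq.symm ▸ hmem
  rw [Finset.mem_filter] at this
  omega

end
theorem good_of_chain {k : ℕ} (hk : 2 ≤ k) (c d : Fin k → ℕ)
    (h1 : c ⟨0, Nat.zero_lt_two.trans_le hk⟩ = 1) (h3 : d ⟨k - 1, Nat.sub_lt (Nat.zero_lt_two.trans_le hk) Nat.one_pos⟩ = 2 * k)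
    (h4 : Set.range c ∪ Set.range d = Set.Icc 1 (2 * k))
    (h5 : ∀ (i : ℕ) (h : i + 1 < k),
      c ⟨i, Nat.lt_of_succ_lt h⟩ < c ⟨i + 1, h⟩ ∧ c ⟨i + 1, h⟩ < d ⟨i, Nat.lt_of_succ_lt h⟩ ∧
      d ⟨i, Nat.lt_of_succ_lt h⟩ < d ⟨i + 1, h⟩) :
    Good k (Finset.univ.image c) ∧
      Finset.Icc 1 (2 * k) \ Finset.univ.image c = Finset.univ.image d := by
  have hc : StrictMono c := strictMono_of_chain (fun i hi => (h5 i hi).1)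
  have hd : StrictMono d := strictMono_of_chain (fun i hi => (h5 i hi).2.2)
  set A := Finset.univ.image c with hA
  set B := Finset.univ.image d with hB
  have hcardA : A.card = k := by
    rw [hA, Finset.card_image_of_injective _ hc.injective, Finset.card_univ, Fintype.card_fin]
  have hcardB : B.card = k := by
    rw [hB, Finset.card_image_of_injective _ hd.injective, Finset.card_univ, Fintype.card_fin]
  have hunion : A ∪ B = Finset.Icc 1 (2 * k) := by
    apply Finset.coe_injective
    rw [Finset.coe_union, hA, hB, Finset.coe_image, Finset.coe_image, Finset.coe_univ,
      Set.image_univ, Set.image_univ, h4, Finset.coe_Icc]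
  have hcardIcc : (Finset.Icc 1 (2 * k)).card = 2 * k := by rw [Nat.card_Icc]; omega
  have hdisj : Disjoint A B := by
    rw [← Finset.disjoint_coe]
    have h2 := Finset.card_union_add_card_inter A B
    rw [hunion, hcardIcc, hcardA, hcardB] at h2
    have : (A ∩ B).card = 0 := by omega
    rw [Finset.card_eq_zero] at this
    rw [← Finset.disjoint_iff_inter_eq_empty] at this
    exact Finset.disjoint_coe.mpr this
  have hAsub : A ⊆ Finset.Icc 1 (2 * k) := hunion ▸ Finset.subset_union_left
  have hBeq : Finset.Icc 1 (2 * k) \ A = B := by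
    rw [← hunion, Finset.union_sdiff_cancel_left hdisj]
  refine ⟨⟨hAsub, hcardA, ?_⟩, hBeq⟩
  intro v hv1 hv2
  rw [hBeq]
  rcases Nat.eq_zero_or_pos (cnt B v) with hj | hj
  · rw [hj]
    have : ((⟨0, by omega⟩ : Fin k) : ℕ) < cnt (Finset.univ.image c) v :=
      (lt_cnt_iff hc _ v).mpr (by rw [h1]; exact hv1)
    have h0 : (0 : ℕ) < cnt (Finset.univ.image c) v := this
    rw [hA]
    exact h0
  · have hjk : cnt B v ≤ k := by have h := cnt_le_card B v; omega
    have hjlt : cnt B v < k := by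
      by_contra hcon
      have hcnt : k - 1 < cnt (Finset.univ.image d) v := by rw [← hB]; omega
      have := (lt_cnt_iff hd ⟨k - 1, by omega⟩ v).mp hcnt
      rw [h3] at this
      omega
    have hdle : d ⟨cnt B v - 1, by omega⟩ ≤ v := by
      apply (lt_cnt_iff hd ⟨cnt B v - 1, by omega⟩ v).mp
      show cnt B v - 1 < cnt (Finset.univ.image d) v
      rw [← hB]; omega
    have hmid : c ⟨cnt B v, by omega⟩ < d ⟨cnt B v - 1, by omega⟩ := by
      have h' := (h5 (cnt B v - 1) (by omega)).2.1
      have hj1 : cnt B v - 1 + 1 = cnt B v := by omega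
      convert h' using 3 <;> omega
    have hfin : cnt B v < cnt (Finset.univ.image c) v :=
      (lt_cnt_iff hc ⟨cnt B v, by omega⟩ v).mpr (le_trans (le_of_lt hmid) hdle)
    rw [hA]
    exact hfin

set_option maxHeartbeats 1000000 in
theorem chain_of_good {k : ℕ} (hk : 2 ≤ k) (A : Finset ℕ) (hA : Good k A) :
    letI c := (A.orderEmbOfFin hA.2.1 : Fin k → ℕ)
    letI d := ((Finset.Icc 1 (2 * k) \ A).orderEmbOfFin (good_card_sdiff hk hA) : Fin k → ℕ)
    c ⟨0, Nat.zero_lt_two.trans_le hk⟩ = 1 ∧ c ⟨1, Nat.one_lt_two.trans_le hk⟩ = 2 ∧ d ⟨k - 1, Nat.sub_lt (Nat.zero_lt_two.trans_le hk) Nat.one_pos⟩ = 2 * k ∧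
      Set.range c ∪ Set.range d = Set.Icc 1 (2 * k) ∧
      ∀ (i : ℕ) (h : i + 1 < k),
        c ⟨i, Nat.lt_of_succ_lt h⟩ < c ⟨i + 1, h⟩ ∧ c ⟨i + 1, h⟩ < d ⟨i, Nat.lt_of_succ_lt h⟩ ∧
        d ⟨i, Nat.lt_of_succ_lt h⟩ < d ⟨i + 1, h⟩ := by
  set B := Finset.Icc 1 (2 * k) \ A with hBdef
  set c : Fin k → ℕ := ⇑(A.orderEmbOfFin hA.2.1) with hcdef
  set d : Fin k → ℕ := ⇑(B.orderEmbOfFin (good_card_sdiff hk hA)) with hddef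
  have hc : StrictMono c := (A.orderEmbOfFin hA.2.1).strictMono
  have hd : StrictMono d := (B.orderEmbOfFin (good_card_sdiff hk hA)).strictMono
  have hcA : Finset.univ.image c = A := image_univ_orderEmbOfFin _
  have hdB : Finset.univ.image d = B := image_univ_orderEmbOfFin _
  have hcmem : ∀ i, c i ∈ A := fun i => Finset.orderEmbOfFin_mem A hA.2.1 i
  have hdmem : ∀ i, d i ∈ B := fun i => Finset.orderEmbOfFin_mem B _ i
  have hAIcc : ∀ x ∈ A, 1 ≤ x ∧ x ≤ 2 * k := by
    intro x hx; have := hA.1 hx; rw [Finset.mem_Icc] at this; exact this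
  have hBIcc : ∀ x ∈ B, 1 ≤ x ∧ x ≤ 2 * k := by
    intro x hx
    rw [hBdef, Finset.mem_sdiff, Finset.mem_Icc] at hx; exact hx.1
  have hcnt1 : 1 ≤ cnt A 1 := by
    have : (1 : ℕ) ∈ A.filter (fun x => x ≤ 1) :=
      Finset.mem_filter.mpr ⟨good_one_mem hk hA, le_rfl⟩
    have := Finset.card_pos.mpr ⟨1, this⟩
    exact this
  -- c 0 = 1
  have hc0 : c ⟨0, by omega⟩ = 1 := by
    have h0 : (0 : ℕ) < cnt (Finset.univ.image c) 1 := by rw [hcA]; omega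
    have := (lt_cnt_iff hc ⟨0, by omega⟩ 1).mp h0
    have h1 := (hAIcc _ (hcmem ⟨0, by omega⟩)).1
    omega
  -- c 1 = 2
  have hc1 : c ⟨1, by omega⟩ = 2 := by
    have hsum := good_cnt_sum hk hA 2
    have hlt := hA.2.2 2 (by omega) (by omega)
    rw [← hBdef] at hsum hlt
    have h2 : (1 : ℕ) < cnt (Finset.univ.image c) 2 := by rw [hcA]; omega
    have hle := (lt_cnt_iff hc ⟨1, by omega⟩ 2).mp h2
    have hgt : c ⟨0, by omega⟩ < c ⟨1, by omega⟩ := hc (by exact Fin.mk_lt_mk.mpr (by omega))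
    rw [hc0] at hgt
    omega
  -- d (k-1) = 2k
  have hdtop : d ⟨k - 1, by omega⟩ = 2 * k := by
    have hsum := good_cnt_sum hk hA (2 * k - 1)
    have htop := good_cnt_top hk hA
    rw [← hBdef] at hsum
    have hnot : ¬ ((k - 1 : ℕ) < cnt (Finset.univ.image d) (2 * k - 1)) := by
      rw [hdB]; omega
    rw [lt_cnt_iff hd ⟨k - 1, by omega⟩ (2 * k - 1)] at hnot
    have := hBIcc _ (hdmem ⟨k - 1, by omega⟩)
    omega
  refine ⟨hc0, hc1, hdtop, ?_, ?_⟩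
  · have : ↑(Finset.univ.image c ∪ Finset.univ.image d) = (Set.Icc 1 (2 * k) : Set ℕ) := by
      rw [hcA, hdB, hBdef, Finset.union_sdiff_of_subset hA.1, Finset.coe_Icc]
    rw [← this, Finset.coe_union, Finset.coe_image, Finset.coe_image, Finset.coe_univ,
      Set.image_univ, Set.image_univ]
  · intro i hi
    refine ⟨hc (Fin.mk_lt_mk.mpr (by omega)), ?_, hd (Fin.mk_lt_mk.mpr (by omega))⟩
    set v := d ⟨i, by omega⟩ with hv
    have hvB := hBIcc _ (hdmem ⟨i, by omega⟩)
    have hvlt : v < 2 * k := by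
      have : d ⟨i, by omega⟩ < d ⟨k - 1, by omega⟩ := hd (Fin.mk_lt_mk.mpr (by omega))
      rw [hdtop] at this
      exact this
    have hdcnt : (i : ℕ) < cnt (Finset.univ.image d) v :=
      (lt_cnt_iff hd ⟨i, by omega⟩ v).mpr le_rfl
    rw [hdB] at hdcnt
    have hlt := hA.2.2 v (by omega) (by omega)
    rw [← hBdef] at hlt
    have hccnt : (i + 1 : ℕ) < cnt (Finset.univ.image c) v := by rw [hcA]; omega
    have hcle := (lt_cnt_iff hc ⟨i + 1, hi⟩ v).mp hccnt
    have hne : c ⟨i + 1, hi⟩ ≠ v := by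
      intro he
      have h1 : v ∈ A := by rw [← he]; exact hcmem _
      have h2 : v ∈ B := hdmem _
      rw [hBdef, Finset.mem_sdiff] at h2
      exact h2.2 h1
    omega
section
variable {n : ℕ} {A : Finset ℕ}

lemma good_pos (hA : Good (n + 1) A) : ∀ x ∈ A, 1 ≤ x := by
  intro x hx; have := hA.1 hx; rw [Finset.mem_Icc] at this; exact this.1

lemma good_le (hA : Good (n + 1) A) : ∀ x ∈ A, x ≤ 2 * n + 2 := by
  intro x hx; have := hA.1 hx; rw [Finset.mem_Icc] at this; omega

variable (hn : 1 ≤ n) (hA : Good (n + 1) A)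
include hn hA

lemma good_count_take (m : ℕ) :
    ((wlist n A).take m).count U + 1 = cnt A (min m (2 * n) + 1) :=
  count_U_take (good_one_mem (k := n + 1) (by omega) hA) (good_pos hA) m

lemma good_count_U : (wlist n A).count U = n := by
  have h := good_count_take hn hA (2 * n)
  rw [List.take_of_length_le (le_of_eq (wlist_length n A)), min_self] at h
  have htop := good_cnt_top (k := n + 1) (by omega) hA
  have : 2 * (n + 1) - 1 = 2 * n + 1 := by omega
  rw [this] at htop
  omega

lemma good_prefix_le (m : ℕ) :
    ((wlist n A).take m).count D ≤ ((wlist n A).take m).count U := by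
  have hlen : ((wlist n A).take m).length = min m (2 * n) := by
    rw [List.length_take, wlist_length]
  have hsum := count_U_add_count_D ((wlist n A).take m)
  have hU := good_count_take hn hA m
  have hgood := hA.2.2 (min m (2 * n) + 1) (by omega) (by omega)
  have hs := good_cnt_sum (k := n + 1) (by omega) hA (min m (2 * n) + 1)
  have hmin : min (min m (2 * n) + 1) (2 * (n + 1)) = min m (2 * n) + 1 := by omega
  rw [hmin] at hs
  omega

/-- The Dyck word associated to a good finset. -/
def toDyck : DyckWord where
  toList := wlist n A
  count_U_eq_count_D := by
    have h1 := good_count_U hn hA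
    have h2 := count_U_add_count_D (wlist n A)
    rw [wlist_length] at h2
    omega
  count_D_le_count_U := good_prefix_le hn hA

lemma toDyck_semilength : (toDyck hn hA).semilength = n := good_count_U hn hA

end

/-- The good finset associated to a Dyck word. -/
def posA (n : ℕ) (p : DyckWord) : Finset ℕ :=
  insert 1 (((Finset.range (2 * n)).filter
    (fun j => p.toList.getD j U = U)).image (· + 2))

section
variable {n : ℕ} (p : DyckWord) (hp : p.semilength = n)

lemma posA_pos : ∀ x ∈ posA n p, 1 ≤ x := by
  intro x hx
  rw [posA, Finset.mem_insert] at hx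
  rcases hx with rfl | hx
  · omega
  · rw [Finset.mem_image] at hx
    obtain ⟨j, -, rfl⟩ := hx
    omega

lemma posA_subset : posA n p ⊆ Finset.Icc 1 (2 * (n + 1)) := by
  intro x hx
  rw [posA, Finset.mem_insert] at hx
  rw [Finset.mem_Icc]
  rcases hx with rfl | hx
  · omega
  · rw [Finset.mem_image] at hx
    obtain ⟨j, hj, rfl⟩ := hx
    rw [Finset.mem_filter, Finset.mem_range] at hj
    omega

lemma one_mem_posA : 1 ∈ posA n p := Finset.mem_insert_self _ _

include hp

lemma toList_length : p.toList.length = 2 * n := by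
  rw [← p.two_mul_semilength_eq_length, hp]

lemma wlist_posA : wlist n (posA n p) = p.toList := by
  apply List.ext_getElem
  · rw [wlist_length, toList_length p hp]
  · intro j h1 h2
    rw [wlist_length] at h1
    rw [wlist_getElem n _ h1]
    have hmem : j + 2 ∈ posA n p ↔ p.toList[j] = U := by
      rw [posA, Finset.mem_insert]
      constructor
      · rintro (h | h)
        · omega
        · rw [Finset.mem_image] at h
          obtain ⟨j', hj', hj2⟩ := h
          have : j' = j := by omega
          subst this
          rw [Finset.mem_filter] at hj'
          rw [← List.getD_eq_getElem p.toList U h2]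
          exact hj'.2
      · intro h
        refine Or.inr (Finset.mem_image.mpr ⟨j, ?_, rfl⟩)
        rw [Finset.mem_filter, Finset.mem_range]
        exact ⟨h1, by rw [List.getD_eq_getElem p.toList U h2]; exact h⟩
    by_cases h : p.toList[j] = U
    · rw [if_pos (hmem.mpr h), h]
    · rw [if_neg (fun hc => h (hmem.mp hc))]
      exact ((p.toList[j]).dichotomy.resolve_left h).symm

lemma posA_cnt_top : cnt (posA n p) (2 * n + 1) = n + 1 := by
  have h := count_U_take (n := n) (A := posA n p) (one_mem_posA p) (posA_pos p) (2 * n)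
  rw [List.take_of_length_le (le_of_eq (wlist_length n _)), min_self, wlist_posA p hp] at h
  have : p.toList.count U = n := hp
  omega

lemma posA_card : (posA n p).card = n + 1 := by
  have h := posA_cnt_top p hp
  rwa [cnt_eq_card _ (fun x hx => by
    have h1 := posA_subset p hx
    rw [Finset.mem_Icc] at h1
    have h2 : x ≠ 2 * (n + 1) := by
      intro hc
      subst hc
      rw [posA, Finset.mem_insert] at hx
      rcases hx with hc | hc
      · omega
      · rw [Finset.mem_image] at hc
        obtain ⟨j, hj, hj2⟩ := hc
        rw [Finset.mem_filter, Finset.mem_range] at hj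
        omega
    omega)] at h

lemma posA_good : Good (n + 1) (posA n p) := by
  refine ⟨posA_subset p, posA_card p hp, ?_⟩
  intro v hv1 hv2
  have hsum : cnt (posA n p) v + cnt (Finset.Icc 1 (2 * (n + 1)) \ posA n p) v
      = min v (2 * (n + 1)) := by
    rw [Nat.add_comm, cnt_sdiff_add (posA_subset p), cnt_Icc]
  have hpre := p.count_D_le_count_U (v - 1)
  rw [← wlist_posA p hp] at hpre
  have hU := count_U_take (n := n) (A := posA n p) (one_mem_posA p) (posA_pos p) (v - 1)
  have hlensum := count_U_add_count_D ((wlist n (posA n p)).take (v - 1))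
  have hlen : ((wlist n (posA n p)).take (v - 1)).length = min (v - 1) (2 * n) := by
    rw [List.length_take, wlist_length]
  have hmin : min (v - 1) (2 * n) + 1 = v := by omega
  rw [hmin] at hU
  omega

end

lemma posA_toDyck {n : ℕ} {A : Finset ℕ} (hn : 1 ≤ n) (hA : Good (n + 1) A) :
    posA n (toDyck hn hA) = A := by
  have hfilter : (Finset.range (2 * n)).filter
      (fun j => (toDyck hn hA).toList.getD j U = U)
      = (Finset.range (2 * n)).filter (fun j => j + 2 ∈ A) := by
    apply Finset.filter_congr
    intro j hj
    rw [Finset.mem_range] at hj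
    have hlen : j < (wlist n A).length := by rw [wlist_length]; exact hj
    show (wlist n A).getD j U = U ↔ j + 2 ∈ A
    rw [List.getD_eq_getElem _ U hlen, wlist_getElem n A hj]
    by_cases h : j + 2 ∈ A <;> simp [h]
  show insert 1 _ = A
  rw [hfilter, image_filter_range]
  ext x
  rw [Finset.mem_insert, Finset.mem_filter]
  constructor
  · rintro (rfl | ⟨hx, -, -⟩)
    · exact good_one_mem (k := n + 1) (by omega) hA
    · exact hx
  · intro hx
    have hp := good_pos hA x hx
    have hle := good_le hA x hx
    have hne : x ≠ 2 * n + 2 := by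
      intro hc
      apply good_top_not_mem (k := n + 1) (by omega) hA
      have h2 : 2 * (n + 1) = x := by omega
      rw [h2]; exact hx
    rcases Nat.eq_or_lt_of_le hp with h | h
    · exact Or.inl h.symm
    · exact Or.inr ⟨hx, by omega, by omega⟩

/-- Equivalence between good finsets and Dyck words of semilength `n`. -/
def equivDyck (n : ℕ) (hn : 1 ≤ n) :
    {A : Finset ℕ // Good (n + 1) A} ≃ {p : DyckWord // p.semilength = n} where
  toFun A := ⟨toDyck hn A.2, toDyck_semilength hn A.2⟩
  invFun p := ⟨posA n p.1, posA_good p.1 p.2⟩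
  left_inv A := Subtype.ext (posA_toDyck hn A.2)
  right_inv p := Subtype.ext (by apply DyckWord.ext; exact wlist_posA p.1 p.2)

end Chains1324

open Chains1324 in
/-- For `k ≥ 2`, the number of sequences `(c₁,d₁,c₂,d₂,…,c_k,d_k)` of
integers with (i) `c₁ = 1`, (ii) `c₂ = 2`, (iii) `d_k = 2k`, (iv) whose set of values is
`{1,…,2k}`, and (v) `cᵢ < cᵢ₊₁ < dᵢ < dᵢ₊₁` for `1 ≤ i ≤ k-1`, equals the Catalan number
`C_{k-1}`.  (Here `c = cd.1` and `d = cd.2`, 0-indexed.) -/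
theorem count_1324_chains_eq_catalan (k : ℕ) (hk : 2 ≤ k) :
    Nat.card {cd : (Fin k → ℕ) × (Fin k → ℕ) //
      cd.1 ⟨0, by omega⟩ = 1 ∧ cd.1 ⟨1, by omega⟩ = 2 ∧ cd.2 ⟨k - 1, by omega⟩ = 2 * k ∧
      Set.range cd.1 ∪ Set.range cd.2 = Set.Icc 1 (2 * k) ∧
      ∀ (i : ℕ) (h : i + 1 < k),
        cd.1 ⟨i, by omega⟩ < cd.1 ⟨i + 1, h⟩ ∧
        cd.1 ⟨i + 1, h⟩ < cd.2 ⟨i, by omega⟩ ∧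
        cd.2 ⟨i, by omega⟩ < cd.2 ⟨i + 1, h⟩}
    = catalan (k - 1) := by
  obtain ⟨n, rfl⟩ : ∃ n, k = n + 1 := ⟨k - 1, by omega⟩
  have hn : 1 ≤ n := by omega
  rw [show catalan (n + 1 - 1) = catalan n from rfl,
    ← DyckWord.card_dyckWord_semilength_eq_catalan n, ← Nat.card_eq_fintype_card]
  apply Nat.card_congr
  refine Equiv.trans ?_ (equivDyck n hn)
  refine
    { toFun := fun x => ⟨Finset.univ.image x.1.1,
        (good_of_chain hk x.1.1 x.1.2 x.2.1 x.2.2.2.1 x.2.2.2.2.1 x.2.2.2.2.2).1⟩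
      invFun := fun A => ⟨((A.1.orderEmbOfFin A.2.2.1 : Fin (n + 1) → ℕ),
        ((Finset.Icc 1 (2 * (n + 1)) \ A.1).orderEmbOfFin
          (good_card_sdiff hk A.2) : Fin (n + 1) → ℕ)),
        chain_of_good hk A.1 A.2⟩
      left_inv := ?_
      right_inv := fun A => Subtype.ext (image_univ_orderEmbOfFin A.2.2.1) }
  intro x
  obtain ⟨⟨c, d⟩, h1, h2, h3, h4, h5⟩ := x
  have hc : StrictMono c := strictMono_of_chain (fun i hi => (h5 i hi).1)
  have hd : StrictMono d := strictMono_of_chain (fun i hi => (h5 i hi).2.2)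
  have hBeq := (good_of_chain hk c d h1 h3 h4 h5).2
  apply Subtype.ext
  apply Prod.ext
  · exact (Finset.orderEmbOfFin_unique _
      (fun i => Finset.mem_image_of_mem c (Finset.mem_univ i)) hc).symm
  · refine (Finset.orderEmbOfFin_unique _ (fun i => ?_) hd).symm
    rw [hBeq]
    exact Finset.mem_image_of_mem d (Finset.mem_univ i)
end
end

section
/- Let p ≥ 4 and n ≥ 1. The number of permutations σ ∈ S_n with no 1324⋯p-match, exactly one left-to-right minimum (equivalently, σ_1 = 1), and exactly one descent equals 2^{n−1} − n if n < p, and equals 2^{n−1} − 2n + p − 1 if n ≥ p. -/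
open scoped Classical

noncomputable section

/-- The number of descents of a permutation of `Fin n` (one-line notation). -/
def desNum {n : ℕ} (σ : Equiv.Perm (Fin n)) : ℕ :=
  (Finset.univ.filter fun i : Fin (n - 1) =>
    σ ⟨(i : ℕ) + 1, by have := i.isLt; omega⟩ < σ ⟨(i : ℕ), by have := i.isLt; omega⟩).card

/-- The number of left-to-right minima of a permutation of `Fin n`. -/
def lrMin {n : ℕ} (σ : Equiv.Perm (Fin n)) : ℕ :=
  (Finset.univ.filter fun j : Fin n => ∀ i : Fin n, i < j → σ j < σ i).card

/-- `σ` has a (consecutive) `τ`-match: some window of `j` consecutive entries of `σ`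
in one-line notation reduces to `τ`, i.e. is order-isomorphic to `τ`. -/
def HasMatch {j n : ℕ} (τ : Equiv.Perm (Fin j)) (σ : Equiv.Perm (Fin n)) : Prop :=
  ∃ (i : ℕ) (h : i + j ≤ n), ∀ a b : Fin j,
    (σ ⟨i + (a : ℕ), by have := a.isLt; omega⟩ < σ ⟨i + (b : ℕ), by have := b.isLt; omega⟩
      ↔ τ a < τ b)

/-- The pattern `1 3 2 4 5 ⋯ p ∈ S_p`: in (0-indexed) one-line notation, the identity
with the values in positions 1 and 2 interchanged. -/
def tau132 (p : ℕ) (hp : 2 < p) : Equiv.Perm (Fin p) :=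
  Equiv.swap ⟨1, by omega⟩ ⟨2, by omega⟩

namespace S9
open Finset

variable {n : ℕ}

def ev (σ : Equiv.Perm (Fin n)) (t : ℕ) : ℕ :=
  if h : t < n then ((σ ⟨t, h⟩ : Fin n) : ℕ) else 0

lemma ev_def (σ : Equiv.Perm (Fin n)) {t : ℕ} (h : t < n) : ev σ t = σ ⟨t, h⟩ := dif_pos h

lemma ev_lt (σ : Equiv.Perm (Fin n)) {t : ℕ} (h : t < n) : ev σ t < n := by
  rw [ev_def σ h]; exact (σ ⟨t, h⟩).isLt

lemma ev_inj (σ : Equiv.Perm (Fin n)) {s t : ℕ} (hs : s < n) (ht : t < n)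
    (h : ev σ s = ev σ t) : s = t := by
  rw [ev_def σ hs, ev_def σ ht] at h
  have := σ.injective (Fin.ext h)
  exact congrArg Fin.val this

lemma desNum_eq (σ : Equiv.Perm (Fin n)) :
    desNum σ = ((range (n-1)).filter fun i => ev σ (i+1) < ev σ i).card := by
  apply Finset.card_bij (fun (i : Fin (n-1)) _ => (i : ℕ))
  · intro i hi
    simp only [mem_filter, mem_univ, true_and] at hi ⊢
    have h1 : (i:ℕ) + 1 < n := by have := i.isLt; omega
    have h2 : (i:ℕ) < n := by omega
    refine ⟨mem_range.2 i.isLt, ?_⟩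
    rw [ev_def σ h1, ev_def σ h2]
    exact hi
  · intro i _ j _ h; exact Fin.ext h
  · intro b hb
    simp only [mem_filter, mem_range] at hb
    refine ⟨⟨b, hb.1⟩, ?_, rfl⟩
    simp only [mem_filter, mem_univ, true_and]
    have h1 : b + 1 < n := by omega
    have h2 : b < n := by omega
    have := hb.2
    rw [ev_def σ h1, ev_def σ h2] at this
    exact this

lemma lrMin_eq_one_iff (hn : 0 < n) (σ : Equiv.Perm (Fin n)) :
    lrMin σ = 1 ↔ ev σ 0 = 0 := by
  rw [ev_def σ hn]
  constructor
  · intro h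
    by_contra hne
    set j := σ.symm ⟨0, hn⟩ with hj
    have hval : σ j = ⟨0, hn⟩ := σ.apply_symm_apply _
    have hjne : j ≠ ⟨0, hn⟩ := fun he => hne (by rw [← he, hval])
    have hmemj : j ∈ Finset.univ.filter fun j : Fin n => ∀ i : Fin n, i < j → σ j < σ i := by
      simp only [mem_filter, mem_univ, true_and]
      intro i hi
      rw [hval, Fin.lt_def]
      have hine : σ i ≠ ⟨0, hn⟩ := fun he =>
        absurd (show i = j by rw [hj, ← he, σ.symm_apply_apply]) (ne_of_lt hi)
      have : (σ i).val ≠ 0 := fun hv => hine (Fin.ext hv)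
      exact Nat.pos_of_ne_zero this
    have hmem0 : (⟨0, hn⟩ : Fin n) ∈ Finset.univ.filter fun j : Fin n => ∀ i : Fin n, i < j → σ j < σ i := by
      simp only [mem_filter, mem_univ, true_and]
      intro i hi
      exact absurd hi (by simp [Fin.lt_def])
    have h2 : 1 < (Finset.univ.filter fun j : Fin n => ∀ i : Fin n, i < j → σ j < σ i).card :=
      Finset.one_lt_card.2 ⟨j, hmemj, ⟨0, hn⟩, hmem0, hjne⟩
    rw [lrMin] at h
    omega
  · intro h
    have : (Finset.univ.filter fun j : Fin n => ∀ i : Fin n, i < j → σ j < σ i) = {⟨0, hn⟩} := by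
      ext j
      simp only [mem_filter, mem_univ, true_and, mem_singleton]
      constructor
      · intro hjp
        by_contra hne
        have h0j : (⟨0, hn⟩ : Fin n) < j := by
          rw [Fin.lt_def]; exact Nat.pos_of_ne_zero (fun hz => hne (Fin.ext hz))
        have := hjp _ h0j
        rw [Fin.lt_def] at this
        omega
      · rintro rfl
        intro i hi
        exact absurd hi (by simp [Fin.lt_def])
    rw [lrMin, this, card_singleton]

/-! ### The permutation attached to a set -/

lemma card_le_n (A : Finset (Fin n)) : A.card ≤ n := by
  simpa using A.card_le_univ

lemma card_compl_eq (A : Finset (Fin n)) : Aᶜ.card = n - A.card := by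
  simp [Finset.card_compl]

def permFun (A : Finset (Fin n)) (i : Fin n) : Fin n :=
  if h : (i : ℕ) < A.card then A.orderEmbOfFin rfl ⟨i, h⟩
  else Aᶜ.orderEmbOfFin (card_compl_eq A) ⟨(i:ℕ) - A.card, by have := i.isLt; omega⟩

lemma permFun_mem_lt (A : Finset (Fin n)) {i : Fin n} (h : (i:ℕ) < A.card) :
    permFun A i ∈ A := by
  rw [permFun, dif_pos h]; exact Finset.orderEmbOfFin_mem _ _ _

lemma permFun_mem_ge (A : Finset (Fin n)) {i : Fin n} (h : A.card ≤ (i:ℕ)) :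
    permFun A i ∈ Aᶜ := by
  rw [permFun, dif_neg (not_lt.2 h)]; exact Finset.orderEmbOfFin_mem _ _ _

lemma permFun_mono_lt (A : Finset (Fin n)) {i j : Fin n} (hij : (i:ℕ) < (j:ℕ))
    (hj : (j:ℕ) < A.card) : permFun A i < permFun A j := by
  have hi : (i:ℕ) < A.card := lt_trans hij hj
  rw [permFun, dif_pos hi, permFun, dif_pos hj]
  exact (A.orderEmbOfFin rfl).strictMono (show (⟨(i:ℕ), hi⟩ : Fin _) < ⟨(j:ℕ), hj⟩ from hij)

lemma permFun_mono_ge (A : Finset (Fin n)) {i j : Fin n} (hij : (i:ℕ) < (j:ℕ))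
    (hi : A.card ≤ (i:ℕ)) : permFun A i < permFun A j := by
  have hj : A.card ≤ (j:ℕ) := le_trans hi (le_of_lt hij)
  rw [permFun, dif_neg (not_lt.2 hi), permFun, dif_neg (not_lt.2 hj)]
  refine (Aᶜ.orderEmbOfFin _).strictMono ?_
  show (i:ℕ) - A.card < (j:ℕ) - A.card
  omega

lemma permFun_inj (A : Finset (Fin n)) : Function.Injective (permFun A) := by
  intro i j h
  rcases lt_trichotomy ((i:ℕ)) ((j:ℕ)) with hij | hij | hij
  · exfalso
    by_cases hj : (j:ℕ) < A.card
    · exact absurd h (ne_of_lt (permFun_mono_lt A hij hj))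
    · by_cases hi : (i:ℕ) < A.card
      · have h1 := permFun_mem_lt A hi
        have h2 := permFun_mem_ge A (not_lt.1 hj)
        rw [h] at h1
        exact (Finset.mem_compl.1 h2) h1
      · exact absurd h (ne_of_lt (permFun_mono_ge A hij (not_lt.1 hi)))
  · exact Fin.ext hij
  · exfalso
    by_cases hi : (i:ℕ) < A.card
    · exact absurd h.symm (ne_of_lt (permFun_mono_lt A hij hi))
    · by_cases hj : (j:ℕ) < A.card
      · have h1 := permFun_mem_lt A hj
        have h2 := permFun_mem_ge A (not_lt.1 hi)
        rw [← h] at h1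
        exact (Finset.mem_compl.1 h2) h1
      · exact absurd h.symm (ne_of_lt (permFun_mono_ge A hij (not_lt.1 hj)))

def permOfSet (A : Finset (Fin n)) : Equiv.Perm (Fin n) :=
  Equiv.ofBijective (permFun A) (Finite.injective_iff_bijective.1 (permFun_inj A))

lemma permOfSet_apply (A : Finset (Fin n)) (i : Fin n) : permOfSet A i = permFun A i := rfl

lemma ev_permOfSet_lt (A : Finset (Fin n)) {t : ℕ} (ht : t < n) (h : t < A.card) :
    ev (permOfSet A) t = (A.orderEmbOfFin rfl ⟨t, h⟩ : Fin n) := by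
  rw [ev_def _ ht, permOfSet_apply, permFun, dif_pos h]

lemma ev_permOfSet_ge (A : Finset (Fin n)) {t : ℕ} (ht : t < n) (h : A.card ≤ t) :
    ev (permOfSet A) t
      = (Aᶜ.orderEmbOfFin (card_compl_eq A) ⟨t - A.card, by omega⟩ : Fin n) := by
  rw [ev_def _ ht, permOfSet_apply, permFun, dif_neg (not_lt.2 h)]

lemma ev_permOfSet_mem_lt (A : Finset (Fin n)) {t : ℕ} (ht : t < n) (h : t < A.card) :
    (⟨ev (permOfSet A) t, ev_lt _ ht⟩ : Fin n) ∈ A := by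
  have he : (⟨ev (permOfSet A) t, ev_lt _ ht⟩ : Fin n) = permOfSet A ⟨t, ht⟩ :=
    Fin.ext (ev_def _ ht)
  rw [he]
  exact permFun_mem_lt A h

lemma ev_permOfSet_mem_ge (A : Finset (Fin n)) {t : ℕ} (ht : t < n) (h : A.card ≤ t) :
    (⟨ev (permOfSet A) t, ev_lt _ ht⟩ : Fin n) ∈ Aᶜ := by
  have he : (⟨ev (permOfSet A) t, ev_lt _ ht⟩ : Fin n) = permOfSet A ⟨t, ht⟩ :=
    Fin.ext (ev_def _ ht)
  rw [he]
  exact permFun_mem_ge A h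

lemma ev_permOfSet_mono_lt (A : Finset (Fin n)) {s t : ℕ} (hst : s < t) (ht : t < n)
    (h : t < A.card) : ev (permOfSet A) s < ev (permOfSet A) t := by
  rw [ev_def _ (lt_trans hst ht), ev_def _ ht]
  exact permFun_mono_lt A hst h

lemma ev_permOfSet_mono_ge (A : Finset (Fin n)) {s t : ℕ} (hst : s < t) (ht : t < n)
    (h : A.card ≤ s) : ev (permOfSet A) s < ev (permOfSet A) t := by
  rw [ev_def _ (lt_trans hst ht), ev_def _ ht]
  exact permFun_mono_ge A hst h

/-- the set of `v : Fin n` with `v.val < j`. -/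
def pref (n j : ℕ) : Finset (Fin n) := Finset.univ.filter fun v => (v:ℕ) < j

lemma mem_pref {j : ℕ} {v : Fin n} : v ∈ pref n j ↔ (v:ℕ) < j := by
  simp [pref]

lemma card_pref {j : ℕ} (hj : j ≤ n) : (pref n j).card = j := by
  have key : (pref n j).card = (Finset.range j).card := by
    apply Finset.card_bij (fun (v : Fin n) _ => (v : ℕ))
    · intro v hv; exact Finset.mem_range.2 (mem_pref.1 hv)
    · intro a _ b _ h; exact Fin.ext h
    · intro b hb
      have hbj : b < j := Finset.mem_range.1 hb
      exact ⟨⟨b, lt_of_lt_of_le hbj hj⟩, mem_pref.2 hbj, rfl⟩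
  rw [key, Finset.card_range]

/-- A is not an initial segment. -/
def NonPref (A : Finset (Fin n)) : Prop := ∃ v ∈ A, A.card ≤ (v:ℕ)

lemma eq_pref_of_not_nonPref {A : Finset (Fin n)} (h : ¬ NonPref A) : A = pref n A.card := by
  have hsub : A ⊆ pref n A.card := by
    intro v hv
    rw [mem_pref]
    by_contra hc
    exact h ⟨v, hv, not_lt.1 hc⟩
  exact Finset.eq_of_subset_of_card_le hsub (le_of_eq (card_pref (card_le_n A)))

lemma min'_compl_lt_card {A : Finset (Fin n)} (hnp : NonPref A)
    (hc : Aᶜ.Nonempty) : ((Aᶜ.min' hc : Fin n) : ℕ) < A.card := by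
  by_contra hge
  push_neg at hge
  have hsub : pref n A.card ⊆ A := by
    intro w hw
    by_contra hwA
    have : Aᶜ.min' hc ≤ w := Finset.min'_le _ _ (Finset.mem_compl.2 hwA)
    rw [mem_pref] at hw
    have : ((Aᶜ.min' hc : Fin n) : ℕ) ≤ (w:ℕ) := this
    omega
  have : pref n A.card = A :=
    Finset.eq_of_subset_of_card_le hsub (le_of_eq (card_pref (card_le_n A)).symm)
  obtain ⟨v, hv, hvc⟩ := hnp
  rw [← this, mem_pref] at hv
  omega

lemma compl_nonempty_of_nonPref {A : Finset (Fin n)} (hnp : NonPref A) : Aᶜ.Nonempty := by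
  obtain ⟨v, hv, hvc⟩ := hnp
  rw [← Finset.card_pos, card_compl_eq]
  have h1 : A.card ≤ (v:ℕ) := hvc
  have h2 : (v:ℕ) < n := v.isLt
  omega

/-! ### Descent structure of `permOfSet` -/

lemma card_lt_n_of_nonPref {A : Finset (Fin n)} (hnp : NonPref A) : A.card < n := by
  have h := compl_nonempty_of_nonPref hnp
  rw [← Finset.card_pos, card_compl_eq] at h
  have := card_le_n A
  omega

lemma ev_permOfSet_max {A : Finset (Fin n)} (h1 : 0 < A.card) (hlt : A.card - 1 < n) :
    ev (permOfSet A) (A.card - 1)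
      = ((A.max' (Finset.card_pos.1 h1) : Fin n) : ℕ) := by
  rw [ev_permOfSet_lt A hlt (by omega)]
  congr 1
  exact Finset.orderEmbOfFin_last rfl h1

lemma ev_permOfSet_min_compl {A : Finset (Fin n)} (hnp : NonPref A) (hlt : A.card < n) :
    ev (permOfSet A) A.card
      = ((Aᶜ.min' (compl_nonempty_of_nonPref hnp) : Fin n) : ℕ) := by
  rw [ev_permOfSet_ge A hlt (le_refl _)]
  congr 1
  have h0 : 0 < Aᶜ.card := Finset.card_pos.2 (compl_nonempty_of_nonPref hnp)
  have := Finset.orderEmbOfFin_zero (card_compl_eq A) (by rw [card_compl_eq] at h0; omega)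
  rw [show (⟨A.card - A.card, by omega⟩ : Fin (n - A.card)) = ⟨0, by rw [card_compl_eq] at h0; omega⟩
    from Fin.ext (by simp)]
  rw [this]

lemma descent_iff {A : Finset (Fin n)} (hnp : NonPref A) (h1 : 0 < A.card)
    {i : ℕ} (hi : i < n - 1) :
    (ev (permOfSet A) (i+1) < ev (permOfSet A) i) ↔ i = A.card - 1 := by
  have hmn : A.card < n := card_lt_n_of_nonPref hnp
  rcases lt_trichotomy (i+1) A.card with hlt | heq | hgt
  · constructor
    · intro h
      exact absurd (ev_permOfSet_mono_lt A (show i < i + 1 by omega) (by omega) hlt) (by omega)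
    · intro h; omega
  · constructor
    · intro _; omega
    · intro _
      have hmax := ev_permOfSet_max (A := A) h1 (by omega)
      have hmin := ev_permOfSet_min_compl hnp hmn
      have hminlt := min'_compl_lt_card hnp (compl_nonempty_of_nonPref hnp)
      obtain ⟨v, hv, hvc⟩ := hnp
      have hle : (v : ℕ) ≤ ((A.max' (Finset.card_pos.1 h1) : Fin n) : ℕ) :=
        Finset.le_max' A v hv
      rw [show i = A.card - 1 by omega, hmax, show A.card - 1 + 1 = A.card by omega, hmin]
      omega
  · constructor
    · intro h
      exact absurd (ev_permOfSet_mono_ge A (show i < i + 1 by omega) (by omega) (by omega)) (by omega)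
    · intro h; omega

lemma desNum_permOfSet {A : Finset (Fin n)} (hnp : NonPref A) (h1 : 0 < A.card) :
    desNum (permOfSet A) = 1 := by
  have hmn : A.card < n := card_lt_n_of_nonPref hnp
  rw [desNum_eq]
  have : ((range (n-1)).filter fun i => ev (permOfSet A) (i+1) < ev (permOfSet A) i)
      = {A.card - 1} := by
    ext i
    simp only [Finset.mem_filter, Finset.mem_range, Finset.mem_singleton]
    constructor
    · rintro ⟨h2, h3⟩; exact (descent_iff hnp h1 h2).1 h3
    · rintro rfl
      have h2 : A.card - 1 < n - 1 := by omega
      exact ⟨h2, (descent_iff hnp h1 h2).2 rfl⟩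
  rw [this, Finset.card_singleton]

lemma ev_permOfSet_zero {A : Finset (Fin n)} (hn0 : 0 < n) (h0 : (⟨0, hn0⟩ : Fin n) ∈ A) :
    ev (permOfSet A) 0 = 0 := by
  have h1 : 0 < A.card := Finset.card_pos.2 ⟨_, h0⟩
  rw [ev_permOfSet_lt A hn0 h1]
  have hmin := Finset.orderEmbOfFin_zero (rfl : A.card = A.card) h1
  rw [hmin]
  have := Finset.min'_le A _ h0
  exact Nat.le_antisymm this (Nat.zero_le _)

/-- If all of `0, …, j` belong to `A` then the `j`-th entry of `permOfSet A` is `j`. -/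
lemma ev_permOfSet_eq_self {A : Finset (Fin n)} :
    ∀ j, j < A.card → (∀ t (ht : t < n), t ≤ j → (⟨t, ht⟩ : Fin n) ∈ A) →
      ev (permOfSet A) j = j := by
  intro j
  induction j using Nat.strong_induction_on with
  | _ j IH =>
    intro hj hall
    have hjn : j < n := lt_of_lt_of_le hj (card_le_n A)
    have hge : j ≤ ev (permOfSet A) j := by
      rcases Nat.eq_zero_or_pos j with rfl | hj0
      · exact Nat.zero_le _
      · have hprev : ev (permOfSet A) (j-1) = j - 1 :=
          IH (j-1) (by omega) (by omega) (fun t ht htle => hall t ht (by omega))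
        have := ev_permOfSet_mono_lt A (show j - 1 < j by omega) hjn hj
        omega
    -- the value j occurs at some position i < A.card
    have hjA : (⟨j, hjn⟩ : Fin n) ∈ A := hall j hjn (le_refl _)
    obtain ⟨i, hi⟩ : ∃ i : Fin n, permOfSet A i = ⟨j, hjn⟩ := ⟨(permOfSet A).symm _, Equiv.apply_symm_apply _ _⟩
    have hiA : (i : ℕ) < A.card := by
      by_contra hc
      have := permFun_mem_ge A (not_lt.1 hc)
      rw [← permOfSet_apply, hi] at this
      exact Finset.mem_compl.1 this hjA
    have hevi : ev (permOfSet A) (i : ℕ) = j := by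
      rw [ev_def _ i.isLt]
      simp only [Fin.eta]
      rw [hi]
    rcases lt_trichotomy ((i : ℕ)) j with hlt | heq | hgt
    · have : ev (permOfSet A) (i:ℕ) = (i:ℕ) :=
        IH _ hlt (by omega) (fun t ht htle => hall t ht (by omega))
      omega
    · rw [← heq, hevi, heq]
    · have := ev_permOfSet_mono_lt A hgt i.isLt hiA
      omega

/-- entries below the descent are at least their index -/
lemma ev_permOfSet_ge_self {A : Finset (Fin n)} :
    ∀ j, j < A.card → j ≤ ev (permOfSet A) j := by
  intro j
  induction j with
  | zero => intro _; exact Nat.zero_le _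
  | succ j IH =>
    intro hj
    have hjn : j + 1 < n := lt_of_lt_of_le hj (card_le_n A)
    have := ev_permOfSet_mono_lt A (show j < j + 1 by omega) hjn hj
    have := IH (by omega)
    omega

/-! ### The pattern and matches -/

lemma tau_apply {p : ℕ} (hp : 2 < p) (a : Fin p) :
    ((tau132 p hp) a : ℕ)
      = if (a : ℕ) = 1 then 2 else if (a : ℕ) = 2 then 1 else (a : ℕ) := by
  by_cases h1 : a = ⟨1, by omega⟩
  · subst h1
    rw [tau132, Equiv.swap_apply_left]
    simp
  · by_cases h2 : a = ⟨2, by omega⟩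
    · subst h2
      rw [tau132, Equiv.swap_apply_right]
      simp
    · rw [tau132, Equiv.swap_apply_of_ne_of_ne h1 h2]
      have hv1 : (a : ℕ) ≠ 1 := fun h => h1 (Fin.ext h)
      have hv2 : (a : ℕ) ≠ 2 := fun h => h2 (Fin.ext h)
      simp [hv1, hv2]

lemma match_structure {p : ℕ} (hp : 4 ≤ p) {σ : Equiv.Perm (Fin n)}
    (h : HasMatch (tau132 p (by omega)) σ) :
    ∃ i, i + p ≤ n ∧ ev σ (i+2) < ev σ (i+1) ∧ ev σ i < ev σ (i+2)
      ∧ ev σ (i+1) < ev σ (i+3) := by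
  obtain ⟨i, hle, hwin⟩ := h
  refine ⟨i, hle, ?_, ?_, ?_⟩
  · have := (hwin ⟨2, by omega⟩ ⟨1, by omega⟩).2
    rw [Fin.lt_def, tau_apply, tau_apply] at this
    simp only [Fin.val_mk] at this
    have h2 := this (by norm_num)
    rw [Fin.lt_def] at h2
    rw [ev_def σ (show i + 2 < n by omega), ev_def σ (show i + 1 < n by omega)]
    exact h2
  · have := (hwin ⟨0, by omega⟩ ⟨2, by omega⟩).2
    rw [Fin.lt_def, tau_apply, tau_apply] at this
    simp only [Fin.val_mk] at this
    have h2 := this (by norm_num)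
    rw [Fin.lt_def] at h2
    rw [ev_def σ (show i < n by omega), ev_def σ (show i + 2 < n by omega)]
    exact h2
  · have := (hwin ⟨1, by omega⟩ ⟨3, by omega⟩).2
    rw [Fin.lt_def, tau_apply, tau_apply] at this
    simp only [Fin.val_mk] at this
    have h2 := this (by norm_num)
    rw [Fin.lt_def] at h2
    rw [ev_def σ (show i + 1 < n by omega), ev_def σ (show i + 3 < n by omega)]
    exact h2

lemma hasMatch_of {p : ℕ} (hp : 4 ≤ p) (σ : Equiv.Perm (Fin n)) (i : ℕ) (hle : i + p ≤ n)
    (h01 : ev σ i < ev σ (i+1))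
    (h21 : ev σ (i+2) < ev σ (i+1))
    (h02 : ev σ i < ev σ (i+2))
    (h13 : ev σ (i+1) < ev σ (i+3))
    (hmono : ∀ s t, i + 2 ≤ s → s < t → t < i + p → ev σ s < ev σ t) :
    HasMatch (tau132 p (by omega)) σ := by
  refine ⟨i, hle, ?_⟩
  -- the one-directional claim
  have claim : ∀ a b : Fin p, ((tau132 p (by omega)) a : ℕ) < ((tau132 p (by omega)) b : ℕ) →
      ev σ (i + (a:ℕ)) < ev σ (i + (b:ℕ)) := by
    intro a b hab
    rw [tau_apply, tau_apply] at hab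
    have hav := a.isLt
    have hbv := b.isLt
    rcases Nat.lt_or_ge (a:ℕ) 3 with ha3 | ha3
    · interval_cases h : (a : ℕ)
      · -- a = 0
        rcases Nat.lt_or_ge (b:ℕ) 3 with hb3 | hb3
        · interval_cases hb : (b : ℕ)
          · simp at hab
          · exact h01
          · exact h02
        · refine lt_trans h02 (hmono (i+2) (i + (b:ℕ)) (le_refl _) (by omega) (by omega))
      · -- a = 1, so τ a = 2 and b ≥ 3
        have hb3 : 3 ≤ (b : ℕ) := by
          by_contra hc
          interval_cases hb : (b : ℕ) <;> simp_all
        rcases Nat.eq_or_lt_of_le hb3 with hb | hb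
        · rw [← hb]; exact h13
        · exact lt_trans h13 (hmono (i+3) (i + (b:ℕ)) (by omega) (by omega) (by omega))
      · -- a = 2, τ a = 1
        rcases Nat.lt_or_ge (b:ℕ) 3 with hb3 | hb3
        · interval_cases hb : (b : ℕ)
          · simp at hab
          · exact h21
          · simp at hab
        · exact hmono (i+2) (i + (b:ℕ)) (le_refl _) (by omega) (by omega)
    · -- a ≥ 3, τ a = a
      rw [if_neg (by omega : ¬(a:ℕ) = 1), if_neg (by omega : ¬(a:ℕ) = 2)] at hab
      have hb3 : 3 ≤ (b : ℕ) ∧ (a:ℕ) < (b:ℕ) := by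
        rcases Nat.lt_or_ge (b:ℕ) 3 with hb3 | hb3
        · interval_cases hb : (b : ℕ) <;> norm_num at hab <;> omega
        · rw [if_neg (by omega : ¬(b:ℕ) = 1), if_neg (by omega : ¬(b:ℕ) = 2)] at hab
          exact ⟨hb3, hab⟩
      exact hmono (i + (a:ℕ)) (i + (b:ℕ)) (by omega) (by omega) (by omega)
  intro a b
  have hav := a.isLt
  have hbv := b.isLt
  rw [Fin.lt_def, Fin.lt_def]
  rw [← ev_def σ (show i + (a:ℕ) < n by omega), ← ev_def σ (show i + (b:ℕ) < n by omega)]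
  constructor
  · intro hw
    rcases lt_trichotomy (((tau132 p (by omega)) a : ℕ)) (((tau132 p (by omega)) b : ℕ)) with
      h | h | h
    · exact h
    · have : a = b := (tau132 p (by omega)).injective (Fin.ext h)
      subst this
      omega
    · have := claim b a h
      omega
  · exact claim a b

/-! ### The matched sets -/

def patSet (n k : ℕ) : Finset (Fin n) :=
  Finset.univ.filter fun v => (v:ℕ) < k ∨ (v:ℕ) = k + 1

lemma mem_patSet {k : ℕ} {v : Fin n} : v ∈ patSet n k ↔ (v:ℕ) < k ∨ (v:ℕ) = k + 1 := by
  simp [patSet]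

lemma patSet_eq_insert {k : ℕ} (h : k + 1 < n) :
    patSet n k = insert (⟨k+1, h⟩ : Fin n) (pref n k) := by
  ext v
  rw [mem_patSet, Finset.mem_insert, mem_pref, Fin.ext_iff]
  simp only [Fin.val_mk]
  omega

lemma card_patSet {k : ℕ} (h : k + 1 < n) : (patSet n k).card = k + 1 := by
  rw [patSet_eq_insert h, Finset.card_insert_of_notMem (by rw [mem_pref]; simp),
    card_pref (by omega)]

lemma zero_mem_patSet {k : ℕ} (hn0 : 0 < n) (hk : 1 ≤ k) : (⟨0, hn0⟩ : Fin n) ∈ patSet n k := by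
  rw [mem_patSet]; left; exact hk

lemma nonPref_patSet {k : ℕ} (h : k + 1 < n) : NonPref (patSet n k) := by
  refine ⟨⟨k+1, h⟩, by rw [mem_patSet]; right; rfl, ?_⟩
  rw [card_patSet h]

lemma min'_compl_patSet {k : ℕ} (h : k + 1 < n) :
    ((patSet n k)ᶜ.min' (compl_nonempty_of_nonPref (nonPref_patSet h)) : Fin n) = ⟨k, by omega⟩ := by
  apply le_antisymm
  · apply Finset.min'_le
    rw [Finset.mem_compl, mem_patSet]
    simp only [Fin.val_mk]
    omega
  · apply Finset.le_min'
    intro y hy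
    rw [Finset.mem_compl, mem_patSet] at hy
    push_neg at hy
    rw [Fin.le_def]
    simp only [Fin.val_mk]
    omega

lemma ev_patSet_lt {k : ℕ} (h : k + 1 < n) {j : ℕ} (hj : j < k) :
    ev (permOfSet (patSet n k)) j = j := by
  apply ev_permOfSet_eq_self j (by rw [card_patSet h]; omega)
  intro t ht htj
  rw [mem_patSet]
  left
  simp only [Fin.val_mk]
  omega

lemma ev_patSet_k {k : ℕ} (hk : 1 ≤ k) (h : k + 1 < n) :
    ev (permOfSet (patSet n k)) k = k + 1 := by
  have hkn : k < n := by omega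
  have hkc : k < (patSet n k).card := by rw [card_patSet h]; omega
  have hmem := ev_permOfSet_mem_lt (patSet n k) hkn hkc
  rw [mem_patSet] at hmem
  simp only [Fin.val_mk] at hmem
  have hgt : ev (permOfSet (patSet n k)) (k-1) < ev (permOfSet (patSet n k)) k :=
    ev_permOfSet_mono_lt _ (by omega) hkn hkc
  rw [ev_patSet_lt h (by omega)] at hgt
  omega

lemma ev_patSet_k1 {k : ℕ} (h : k + 1 < n) :
    ev (permOfSet (patSet n k)) (k+1) = k := by
  have := ev_permOfSet_min_compl (nonPref_patSet h) (by rw [card_patSet h]; exact h)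
  rw [card_patSet h] at this
  rw [this, min'_compl_patSet h]

lemma ev_patSet_k2 {k : ℕ} (hk : 1 ≤ k) (h : k + 2 < n) :
    k + 2 ≤ ev (permOfSet (patSet n k)) (k+2) := by
  have h' : k + 1 < n := by omega
  have hmem := ev_permOfSet_mem_ge (patSet n k) (show k+2 < n from h)
    (by rw [card_patSet h']; omega)
  rw [Finset.mem_compl, mem_patSet] at hmem
  push_neg at hmem
  simp only [Fin.val_mk] at hmem
  have hgt : ev (permOfSet (patSet n k)) (k+1) < ev (permOfSet (patSet n k)) (k+2) :=
    ev_permOfSet_mono_ge _ (by omega) h (le_of_eq (card_patSet h'))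
  rw [ev_patSet_k1 h'] at hgt
  omega

lemma hasMatch_patSet {p k : ℕ} (hp : 4 ≤ p) (hk : 1 ≤ k) (hkp : k + p ≤ n + 1) :
    HasMatch (tau132 p (by omega)) (permOfSet (patSet n k)) := by
  have h1 : k + 1 < n := by omega
  have h2 : k + 2 < n := by omega
  have e0 : ev (permOfSet (patSet n k)) (k-1) = k - 1 := ev_patSet_lt h1 (by omega)
  have e1 := ev_patSet_k hk h1
  have e2 := ev_patSet_k1 h1
  have e3 := ev_patSet_k2 hk h2
  have hasm := hasMatch_of (n := n) hp (permOfSet (patSet n k)) (k-1) (by omega)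
    (by rw [show k - 1 + 1 = k by omega, e0, e1]; omega)
    (by rw [show k - 1 + 1 = k by omega, show k - 1 + 2 = k + 1 by omega, e1, e2]; omega)
    (by rw [show k - 1 + 2 = k + 1 by omega, e0, e2]; omega)
    (by rw [show k - 1 + 1 = k by omega, show k - 1 + 3 = k + 2 by omega, e1]; omega)
    (fun s t hs hst ht => ev_permOfSet_mono_ge _ hst (by omega)
      (by rw [card_patSet h1]; omega))
  exact hasm

lemma eq_patSet_of_match {A : Finset (Fin n)} (hn0 : 0 < n) (h0 : (⟨0, hn0⟩ : Fin n) ∈ A)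
    (hnp : NonPref A) {p : ℕ} (hp : 4 ≤ p)
    (hm : HasMatch (tau132 p (by omega)) (permOfSet A)) :
    ∃ k, 1 ≤ k ∧ k + p ≤ n + 1 ∧ A = patSet n k := by
  set σ := permOfSet A with hσ
  have h1 : 0 < A.card := Finset.card_pos.2 ⟨_, h0⟩
  have hmn : A.card < n := card_lt_n_of_nonPref hnp
  obtain ⟨i, hip, hd, h02, h13⟩ := match_structure hp hm
  have hin : i + 4 ≤ n := by omega
  have hi1n : i + 1 < n := by omega
  have hi2n : i + 2 < n := by omega
  have hidx : i + 1 = A.card - 1 := by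
    have := (descent_iff hnp h1 (show i + 1 < n - 1 by omega)).1
      (by rw [show i + 1 + 1 = i + 2 by omega]; exact hd)
    exact this
  have hmcard : A.card = i + 2 := by omega
  have hminc := ev_permOfSet_min_compl hnp hmn
  rw [hmcard] at hminc
  have hgi : i ≤ ev σ i := ev_permOfSet_ge_self i (by omega)
  -- everything up to i is in A
  have C1 : ∀ t (ht : t < n), t ≤ i → (⟨t, ht⟩ : Fin n) ∈ A := by
    intro t ht hti
    by_contra hc
    have hmin := Finset.min'_le Aᶜ _ (Finset.mem_compl.2 hc)
    rw [Fin.le_def] at hmin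
    simp only [Fin.val_mk] at hmin
    rw [← hσ] at hminc
    omega
  have e_self : ∀ j, j ≤ i → ev σ j = j := fun j hj =>
    ev_permOfSet_eq_self j (by omega) (fun t ht htj => C1 t ht (by omega))
  -- the value at position i+2 is i+1
  have hb0 : ev σ (i+2) = i + 1 := by
    have hblt : ((Aᶜ.min' (compl_nonempty_of_nonPref hnp) : Fin n) : ℕ) < A.card :=
      min'_compl_lt_card hnp _
    have : ev σ i < ev σ (i+2) := h02
    rw [e_self i (le_refl _)] at this
    rw [← hσ] at hminc
    omega
  -- the value at position i+1
  set am := ev σ (i+1) with ham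
  have hamlt : am < n := ev_lt σ (by omega)
  have hmemA : (⟨am, hamlt⟩ : Fin n) ∈ A := ev_permOfSet_mem_lt A (by omega) (by omega)
  have hb0mem : (⟨i+1, hi1n⟩ : Fin n) ∈ Aᶜ := by
    have := ev_permOfSet_mem_ge A hi2n (by omega)
    have he : (⟨ev (permOfSet A) (i+2), ev_lt _ hi2n⟩ : Fin n) = ⟨i+1, hi1n⟩ :=
      Fin.ext (by rw [← hσ] at *; exact hb0)
    rwa [he] at this
  have hamge : i + 2 ≤ am := by
    have hgt : ev σ i < ev σ (i+1) := by
      apply ev_permOfSet_mono_lt A (by omega) (by omega) (by omega)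
    rw [e_self i (le_refl _)] at hgt
    have hne : am ≠ i + 1 := by
      intro he
      have : (⟨am, hamlt⟩ : Fin n) = ⟨i+1, hi1n⟩ := Fin.ext he
      rw [this] at hmemA
      exact (Finset.mem_compl.1 hb0mem) hmemA
    omega
  -- A = insert am (pref n (i+1))
  have hAeq : A = insert (⟨am, hamlt⟩ : Fin n) (pref n (i+1)) := by
    symm
    apply Finset.eq_of_subset_of_card_le
    · intro v hv
      rcases Finset.mem_insert.1 hv with rfl | hv
      · exact hmemA
      · rw [mem_pref] at hv
        exact (Fin.eta v v.isLt) ▸ C1 (v:ℕ) v.isLt (by omega)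
    · rw [Finset.card_insert_of_notMem (by rw [mem_pref]; simp only [Fin.val_mk]; omega),
        card_pref (by omega), hmcard]
  -- am = i+2
  have ham2 : am = i + 2 := by
    by_contra hne
    have hgt2 : i + 2 < am := by omega
    have hi2c : (⟨i+2, hi2n⟩ : Fin n) ∈ Aᶜ := by
      rw [Finset.mem_compl, hAeq, Finset.mem_insert, mem_pref]
      push_neg
      constructor
      · intro he
        rw [Fin.ext_iff] at he
        simp only [Fin.val_mk] at he
        omega
      · simp only [Fin.val_mk]; omega
    set t := σ.symm ⟨i+2, hi2n⟩ with hts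
    have hσt : σ t = ⟨i+2, hi2n⟩ := Equiv.apply_symm_apply _ _
    have htge : A.card ≤ (t : ℕ) := by
      by_contra hc
      push_neg at hc
      have := permFun_mem_lt A hc
      rw [← permOfSet_apply, ← hσ, hσt] at this
      exact (Finset.mem_compl.1 hi2c) this
    have hevt : ev σ (t : ℕ) = i + 2 := by
      rw [ev_def _ t.isLt]
      simp only [Fin.eta]
      rw [hσt]
    have htne : (t : ℕ) ≠ i + 2 := by
      intro he
      rw [he] at hevt
      omega
    have hge3 : i + 3 ≤ (t : ℕ) := by omega
    have hle3 : ev σ (i+3) ≤ i + 2 := by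
      rcases Nat.eq_or_lt_of_le hge3 with he | hlt
      · rw [← he] at hevt; omega
      · have := ev_permOfSet_mono_ge A hlt t.isLt (by omega)
        rw [← hσ] at this
        omega
    omega
  refine ⟨i + 1, by omega, by omega, ?_⟩
  rw [hAeq, patSet_eq_insert (show i + 1 + 1 < n by omega)]
  congr 1
  exact Fin.ext (by simp only [Fin.val_mk]; omega)

/-! ### Reconstruction: every permutation with one descent and first entry 0 comes from a set -/

lemma ev_run (σ : Equiv.Perm (Fin n)) {a b : ℕ}
    (h : ∀ t, a ≤ t → t < b → ev σ t < ev σ (t+1)) :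
    ∀ s t, a ≤ s → s < t → t ≤ b → ev σ s < ev σ t := by
  intro s t hs hst htb
  induction t with
  | zero => omega
  | succ t IH =>
    rcases Nat.lt_or_ge s t with hlt | hge
    · exact lt_trans (IH (by omega) (by omega)) (h t (by omega) (by omega))
    · have : s = t := by omega
      subst this
      exact h s hs (by omega)

lemma exists_unique_descent {σ : Equiv.Perm (Fin n)} (h : desNum σ = 1) :
    ∃ k, k < n - 1 ∧ (ev σ (k+1) < ev σ k) ∧
      ∀ i, i < n - 1 → ev σ (i+1) < ev σ i → i = k := by
  rw [desNum_eq] at h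
  obtain ⟨a, ha⟩ := Finset.card_eq_one.1 h
  have hmem : a ∈ ((range (n-1)).filter fun i => ev σ (i+1) < ev σ i) := by
    rw [ha]; exact Finset.mem_singleton_self a
  rw [Finset.mem_filter, Finset.mem_range] at hmem
  refine ⟨a, hmem.1, hmem.2, ?_⟩
  intro i hi hdi
  have : i ∈ ((range (n-1)).filter fun i => ev σ (i+1) < ev σ i) := by
    rw [Finset.mem_filter, Finset.mem_range]; exact ⟨hi, hdi⟩
  rw [ha, Finset.mem_singleton] at this
  exact this

lemma ascent_of_ne {σ : Equiv.Perm (Fin n)} {k : ℕ}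
    (huniq : ∀ i, i < n - 1 → ev σ (i+1) < ev σ i → i = k)
    {i : ℕ} (hi : i < n - 1) (hne : i ≠ k) : ev σ i < ev σ (i+1) := by
  rcases lt_trichotomy (ev σ i) (ev σ (i+1)) with h | h | h
  · exact h
  · exact absurd (ev_inj σ (by omega) (by omega) h) (by omega)
  · exact absurd (huniq i hi h) hne

lemma reconstruct (hn0 : 0 < n) (σ : Equiv.Perm (Fin n)) (h0 : ev σ 0 = 0)
    (hd : desNum σ = 1) :
    ∃ A : Finset (Fin n), (⟨0, hn0⟩ : Fin n) ∈ A ∧ NonPref A ∧ permOfSet A = σ := by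
  obtain ⟨k, hk, hdk, huniq⟩ := exists_unique_descent hd
  have hk1n : k + 1 < n := by omega
  set A := (pref n (k+1)).image σ with hA
  have hcard : A.card = k + 1 := by
    rw [hA, Finset.card_image_of_injective _ σ.injective, card_pref (by omega)]
  have asc1 : ∀ s t, s < t → t ≤ k → ev σ s < ev σ t := by
    intro s t hst htk
    exact ev_run σ (fun t h1 h2 => ascent_of_ne huniq (by omega) (by omega)) s t (Nat.zero_le _) hst htk
  have asc2 : ∀ s t, k + 1 ≤ s → s < t → t ≤ n - 1 → ev σ s < ev σ t := by
    intro s t hks hst htn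
    exact ev_run σ (fun t h1 h2 => ascent_of_ne huniq (by omega) (by omega)) s t hks hst htn
  have hposA : ∀ i : Fin n, σ i ∈ A ↔ (i : ℕ) < k + 1 := by
    intro i
    constructor
    · intro hi
      rw [hA, Finset.mem_image] at hi
      obtain ⟨j, hj, hji⟩ := hi
      rw [mem_pref] at hj
      rw [← σ.injective hji]
      exact hj
    · intro hi
      rw [hA, Finset.mem_image]
      exact ⟨i, mem_pref.2 hi, rfl⟩
  -- first segment
  have hf : (fun j : Fin A.card => σ ⟨(j : ℕ), by have := j.isLt; omega⟩)
      = A.orderEmbOfFin rfl := by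
    apply Finset.orderEmbOfFin_unique
    · intro x
      rw [hposA]
      simp only [Fin.val_mk]
      have := x.isLt
      omega
    · intro x y hxy
      have hx : (x : ℕ) < k + 1 := by have := x.isLt; omega
      have hy : (y : ℕ) < k + 1 := by have := y.isLt; omega
      rw [Fin.lt_def]
      rw [← ev_def σ (show (x:ℕ) < n by omega), ← ev_def σ (show (y:ℕ) < n by omega)]
      exact asc1 _ _ hxy (by omega)
  -- second segment
  have hg : (fun j : Fin (n - A.card) => σ ⟨A.card + (j : ℕ), by have := j.isLt; omega⟩)
      = Aᶜ.orderEmbOfFin (card_compl_eq A) := by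
    apply Finset.orderEmbOfFin_unique
    · intro x
      rw [Finset.mem_compl, hposA]
      simp only [Fin.val_mk]
      omega
    · intro x y hxy
      have hy : A.card + (y : ℕ) < n := by have := y.isLt; omega
      rw [Fin.lt_def]
      rw [← ev_def σ (show A.card + (x:ℕ) < n by omega), ← ev_def σ hy]
      exact asc2 _ _ (by omega) (by omega) (by omega)
  have hperm : permOfSet A = σ := by
    apply Equiv.ext
    intro i
    rw [permOfSet_apply, permFun]
    split_ifs with h
    · have := congrFun hf ⟨(i : ℕ), h⟩
      simp only [Fin.val_mk] at this
      rw [← this]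
    · have := congrFun hg ⟨(i : ℕ) - A.card, by have := i.isLt; omega⟩
      simp only [Fin.val_mk] at this
      rw [← this]
      exact congrArg σ (Fin.ext (by simp only [Fin.val_mk]; omega))
  have h0A : (⟨0, hn0⟩ : Fin n) ∈ A := by
    have hσ0 : σ ⟨0, hn0⟩ = ⟨0, hn0⟩ := by
      apply Fin.ext
      rw [← ev_def σ hn0, h0]
    rw [← hσ0, hposA]
    simp
  refine ⟨A, h0A, ?_, hperm⟩
  -- NonPref
  by_contra hnp
  have hnp' : ∀ v ∈ A, (v:ℕ) < A.card := by
    intro v hv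
    by_contra hc
    exact hnp ⟨v, hv, by omega⟩
  have hAp : A = pref n (k+1) := by
    apply Finset.eq_of_subset_of_card_le
    · intro v hv
      rw [mem_pref]
      have := hnp' v hv
      omega
    · rw [card_pref (by omega), hcard]
  have hkn : k < n := by omega
  have hevk : ev σ k < n := ev_lt σ hkn
  have hmema : (⟨ev σ k, hevk⟩ : Fin n) ∈ A := by
    have := ev_permOfSet_mem_lt A (t := k) hkn (by omega)
    rw [hperm] at this
    exact this
  have h1 : ev σ k < k + 1 := by
    have := hnp' _ hmema
    simp only [Fin.val_mk] at this
    omega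
  have hvk1 : ev σ (k+1) < n := ev_lt σ hk1n
  have hmemc : (⟨ev σ (k+1), hvk1⟩ : Fin n) ∈ Aᶜ := by
    have := ev_permOfSet_mem_ge A (t := k+1) hk1n (by omega)
    rw [hperm] at this
    exact this
  have h2 : ¬ (ev σ (k+1) < k+1) := by
    intro hlt
    have : (⟨ev σ (k+1), hvk1⟩ : Fin n) ∈ A := by
      rw [hAp, mem_pref]
      exact hlt
    exact (Finset.mem_compl.1 hmemc) this
  omega

lemma image_pref_permOfSet (A : Finset (Fin n)) :
    (pref n A.card).image (permOfSet A) = A := by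
  apply Finset.eq_of_subset_of_card_le
  · intro v hv
    rw [Finset.mem_image] at hv
    obtain ⟨j, hj, hji⟩ := hv
    rw [mem_pref] at hj
    rw [← hji, permOfSet_apply]
    exact permFun_mem_lt A hj
  · rw [Finset.card_image_of_injective _ (permOfSet A).injective, card_pref (card_le_n A)]

lemma permOfSet_injOn {A B : Finset (Fin n)} (hnpA : NonPref A) (h1A : 0 < A.card)
    (hnpB : NonPref B) (h1B : 0 < B.card) (h : permOfSet A = permOfSet B) : A = B := by
  have hmnA : A.card < n := card_lt_n_of_nonPref hnpA
  have hmnB : B.card < n := card_lt_n_of_nonPref hnpB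
  have hdA : ev (permOfSet A) (A.card - 1 + 1) < ev (permOfSet A) (A.card - 1) :=
    (descent_iff hnpA h1A (by omega)).2 rfl
  rw [h] at hdA
  have := (descent_iff hnpB h1B (show A.card - 1 < n - 1 by omega)).1 hdA
  have hcards : A.card = B.card := by omega
  rw [← image_pref_permOfSet A, ← image_pref_permOfSet B, ← hcards, h]

/-! ### Counting -/

lemma card_U (hn0 : 0 < n) :
    (Finset.univ.filter fun A : Finset (Fin n) => (⟨0, hn0⟩ : Fin n) ∈ A).card
      = 2 ^ (n - 1) := by
  have h1 : (Finset.univ.filter fun A : Finset (Fin n) => (⟨0, hn0⟩ : Fin n) ∈ A).card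
      = ((Finset.univ.erase (⟨0, hn0⟩ : Fin n)).powerset).card := by
    apply Finset.card_bij' (fun A _ => A.erase ⟨0, hn0⟩) (fun B _ => insert (⟨0, hn0⟩ : Fin n) B)
    · intro A hA
      rw [Finset.mem_filter] at hA
      exact Finset.insert_erase hA.2
    · intro B hB
      rw [Finset.mem_powerset] at hB
      apply Finset.erase_insert
      intro h
      exact (Finset.mem_erase.1 (hB h)).1 rfl
    · intro A hA
      rw [Finset.mem_powerset]
      exact Finset.erase_subset_erase _ (Finset.subset_univ A)
    · intro B hB
      rw [Finset.mem_filter]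
      exact ⟨Finset.mem_univ _, Finset.mem_insert_self _ _⟩
  rw [h1, Finset.card_powerset, Finset.card_erase_of_mem (Finset.mem_univ _),
    Finset.card_univ, Fintype.card_fin]

lemma card_P1 (hn0 : 0 < n) :
    ((Finset.range n).image (fun j => pref n (j+1))).card = n := by
  have hinj : Set.InjOn (fun j => pref n (j+1)) (Finset.range n) := by
    intro a ha b hb hab
    rw [Finset.mem_coe, Finset.mem_range] at ha hb
    have : (pref n (a+1)).card = (pref n (b+1)).card := by
      simp only at hab
      rw [hab]
    rw [card_pref (by omega), card_pref (by omega)] at this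
    omega
  rw [Finset.card_image_of_injOn hinj, Finset.card_range]

lemma card_P2 {p : ℕ} (hp : 4 ≤ p) :
    ((Finset.Icc 1 (n+1-p)).image (fun k => patSet n k)).card = n + 1 - p := by
  rcases le_or_gt p (n + 1) with hpn1 | hpn1
  · have hinj : Set.InjOn (fun k => patSet n k) (Finset.Icc 1 (n+1-p)) := by
      intro a ha b hb hab
      rw [Finset.mem_coe, Finset.mem_Icc] at ha hb
      have hpn : p ≤ n := by omega
      have : (patSet n a).card = (patSet n b).card := by
        simp only at hab
        rw [hab]
      rw [card_patSet (by omega), card_patSet (by omega)] at this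
      omega
    rw [Finset.card_image_of_injOn hinj, Nat.card_Icc]
    omega
  · have : n + 1 - p = 0 := by omega
    rw [this]
    simp

lemma notNonPref_iff_mem_P1 (hn0 : 0 < n) {A : Finset (Fin n)}
    (h0 : (⟨0, hn0⟩ : Fin n) ∈ A) :
    (¬ NonPref A) ↔ A ∈ (Finset.range n).image (fun j => pref n (j+1)) := by
  constructor
  · intro hnp
    rw [Finset.mem_image]
    have h1 : 0 < A.card := Finset.card_pos.2 ⟨_, h0⟩
    have h2 : A.card ≤ n := card_le_n A
    refine ⟨A.card - 1, Finset.mem_range.2 (by omega), ?_⟩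
    rw [show A.card - 1 + 1 = A.card by omega]
    exact (eq_pref_of_not_nonPref hnp).symm
  · intro hmem
    rw [Finset.mem_image] at hmem
    obtain ⟨j, hj, hA⟩ := hmem
    rw [Finset.mem_range] at hj
    rintro ⟨v, hv, hvc⟩
    rw [← hA] at hv
    rw [mem_pref] at hv
    rw [← hA, card_pref (by omega)] at hvc
    omega

lemma match_iff_mem_P2 {p : ℕ} (hp : 4 ≤ p) (hn0 : 0 < n) {A : Finset (Fin n)}
    (h0 : (⟨0, hn0⟩ : Fin n) ∈ A) (hnp : NonPref A) :
    HasMatch (tau132 p (by omega)) (permOfSet A)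
      ↔ A ∈ (Finset.Icc 1 (n+1-p)).image (fun k => patSet n k) := by
  constructor
  · intro hm
    obtain ⟨k, hk1, hkp, hA⟩ := eq_patSet_of_match hn0 h0 hnp hp hm
    rw [Finset.mem_image]
    exact ⟨k, Finset.mem_Icc.2 ⟨hk1, by omega⟩, hA.symm⟩
  · intro hmem
    rw [Finset.mem_image] at hmem
    obtain ⟨k, hk, hA⟩ := hmem
    rw [Finset.mem_Icc] at hk
    have hpn : p ≤ n := by omega
    rw [← hA]
    exact hasMatch_patSet hp hk.1 (by omega)

lemma two_mul_le_pow : ∀ m : ℕ, 4 ≤ m → 2 * m ≤ 2 ^ (m - 1) := by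
  intro m
  induction m with
  | zero => omega
  | succ m IH =>
    intro h
    rcases Nat.lt_or_ge m 4 with h4 | h4
    · interval_cases m <;> simp_all
    · have := IH h4
      have he : m + 1 - 1 = (m - 1) + 1 := by omega
      rw [he, pow_succ]
      omega

end S9

/-- For `p ≥ 4` and `n ≥ 1`, the number of permutations of `S_n` with no
`1324⋯p`-match, exactly one left-to-right minimum and exactly one descent equals
`2^{n-1} - n` if `n < p`, and `2^{n-1} - 2n + p - 1` if `n ≥ p`. -/
theorem count_nomatch_one_lrmin_one_descent (p : ℕ) (hp : 4 ≤ p) (n : ℕ) (hn : 1 ≤ n) :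
    (Nat.card {σ : Equiv.Perm (Fin n) //
        ¬ HasMatch (tau132 p (by omega)) σ ∧ lrMin σ = 1 ∧ desNum σ = 1} : ℤ)
    = if n < p then 2 ^ (n - 1) - n else 2 ^ (n - 1) - 2 * n + p - 1 := by
  classical
  have hn0 : 0 < n := hn
  have hcard1 : Nat.card {σ : Equiv.Perm (Fin n) //
      ¬ HasMatch (tau132 p (by omega)) σ ∧ lrMin σ = 1 ∧ desNum σ = 1}
      = (Finset.univ.filter fun σ : Equiv.Perm (Fin n) =>
          ¬ HasMatch (tau132 p (by omega)) σ ∧ lrMin σ = 1 ∧ desNum σ = 1).card := by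
    rw [Nat.card_eq_fintype_card, Fintype.card_subtype]
  set P1 := (Finset.range n).image (fun j => S9.pref n (j+1)) with hP1
  set P2 := (Finset.Icc 1 (n+1-p)).image (fun k => S9.patSet n k) with hP2
  set U := (Finset.univ.filter fun A : Finset (Fin n) => (⟨0, hn0⟩ : Fin n) ∈ A) with hU
  set C := (Finset.univ.filter fun A : Finset (Fin n) =>
      ((⟨0, hn0⟩ : Fin n) ∈ A ∧ S9.NonPref A)
        ∧ ¬ HasMatch (tau132 p (by omega)) (S9.permOfSet A)) with hC
  -- bijection between target permutations and sets
  have hbij : C.card = (Finset.univ.filter fun σ : Equiv.Perm (Fin n) =>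
      ¬ HasMatch (tau132 p (by omega)) σ ∧ lrMin σ = 1 ∧ desNum σ = 1).card := by
    apply Finset.card_bij (fun (A : Finset (Fin n)) _ => S9.permOfSet A)
    · intro A hA
      rw [hC, Finset.mem_filter] at hA
      obtain ⟨-, ⟨h0, hnp⟩, hnm⟩ := hA
      rw [Finset.mem_filter]
      refine ⟨Finset.mem_univ _, hnm, ?_, ?_⟩
      · exact (S9.lrMin_eq_one_iff hn0 _).2 (S9.ev_permOfSet_zero hn0 h0)
      · exact S9.desNum_permOfSet hnp (Finset.card_pos.2 ⟨_, h0⟩)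
    · intro A hA B hB h
      rw [hC, Finset.mem_filter] at hA hB
      exact S9.permOfSet_injOn hA.2.1.2 (Finset.card_pos.2 ⟨_, hA.2.1.1⟩)
        hB.2.1.2 (Finset.card_pos.2 ⟨_, hB.2.1.1⟩) h
    · intro σ hσ
      rw [Finset.mem_filter] at hσ
      obtain ⟨-, hnm, hlr, hds⟩ := hσ
      obtain ⟨A, h0, hnp, hperm⟩ := S9.reconstruct hn0 σ ((S9.lrMin_eq_one_iff hn0 σ).1 hlr) hds
      refine ⟨A, ?_, hperm⟩
      rw [hC, Finset.mem_filter]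
      refine ⟨Finset.mem_univ _, ⟨h0, hnp⟩, ?_⟩
      rw [hperm]
      exact hnm
  -- C = U \ (P1 ∪ P2)
  have hCeq : C = U \ (P1 ∪ P2) := by
    ext A
    rw [hC, hU, Finset.mem_filter, Finset.mem_sdiff, Finset.mem_filter, Finset.mem_union]
    constructor
    · rintro ⟨hu, ⟨h0, hnp⟩, hnm⟩
      refine ⟨⟨hu, h0⟩, ?_⟩
      rintro (hm1 | hm2)
      · exact (S9.notNonPref_iff_mem_P1 hn0 h0).2 hm1 hnp
      · exact hnm ((S9.match_iff_mem_P2 hp hn0 h0 hnp).2 hm2)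
    · rintro ⟨⟨hu, h0⟩, hnmem⟩
      have hnp : S9.NonPref A := by
        by_contra hc
        exact hnmem (Or.inl ((S9.notNonPref_iff_mem_P1 hn0 h0).1 hc))
      refine ⟨hu, ⟨h0, hnp⟩, ?_⟩
      intro hm
      exact hnmem (Or.inr ((S9.match_iff_mem_P2 hp hn0 h0 hnp).1 hm))
  -- subset and disjointness
  have hsubP1 : P1 ⊆ U := by
    intro A hA
    rw [hP1, Finset.mem_image] at hA
    obtain ⟨j, _, rfl⟩ := hA
    rw [hU, Finset.mem_filter]
    exact ⟨Finset.mem_univ _, S9.mem_pref.2 (by simp)⟩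
  have hsubP2 : P2 ⊆ U := by
    intro A hA
    rw [hP2, Finset.mem_image] at hA
    obtain ⟨k, hk, rfl⟩ := hA
    rw [Finset.mem_Icc] at hk
    rw [hU, Finset.mem_filter]
    exact ⟨Finset.mem_univ _, S9.zero_mem_patSet hn0 hk.1⟩
  have hdisj : Disjoint P1 P2 := by
    rw [Finset.disjoint_left]
    intro A h1 h2
    have h0 : (⟨0, hn0⟩ : Fin n) ∈ A := by
      have := hsubP1 h1
      rw [hU, Finset.mem_filter] at this
      exact this.2
    have hnp : S9.NonPref A := by
      rw [hP2, Finset.mem_image] at h2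
      obtain ⟨k, hk, rfl⟩ := h2
      rw [Finset.mem_Icc] at hk
      exact S9.nonPref_patSet (by omega)
    exact (S9.notNonPref_iff_mem_P1 hn0 h0).2 h1 hnp
  have hfinal : C.card = 2 ^ (n-1) - (n + (n + 1 - p)) := by
    rw [hCeq, Finset.card_sdiff_of_subset (Finset.union_subset hsubP1 hsubP2),
      Finset.card_union_of_disjoint hdisj]
    rw [hU, S9.card_U hn0]
    rw [hP1, hP2, S9.card_P1 hn0, S9.card_P2 hp]
  rw [hcard1, ← hbij, hfinal]
  have hnle : n ≤ 2 ^ (n - 1) := by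
    have := Nat.lt_two_pow_self (n := n - 1)
    omega
  obtain ⟨N, hgen⟩ : ∃ N, 2 ^ (n-1) = N := ⟨_, rfl⟩
  have hpow := S9.two_mul_le_pow
  rw [hgen] at hnle ⊢
  split_ifs with hcase
  · omega
  · have h4 : 4 ≤ n := by omega
    have := hpow n h4
    rw [hgen] at this
    omega
end
end
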